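/- Let (V,f) be a nondegenerate symplectic space over a field F of characteristic ≠ 2. Then the Lie algebra 𝔰_f acting on V is exactly the finitary symplectic Lie algebra: every finitary linear map t : V → V satisfying f(t(v),w) = −f(v,t(w)) for all v,w ∈ V is a finite linear combination of the rank-one maps u ↦ f(v,u)v. -/

import Mathlib

/-- The rank-one map associated to `v ∈ V`: `u ↦ f(v,u) • v` (the action of `v ⊗ f_v`). -/
noncomputable def rk1 {F V : Type*} [Field F] [AddCommGroup V] [Module F V]
    (f : V →ₗ[F] V →ₗ[F] F) (v : V) : Module.End F V :=
  (f v).smulRight v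

lemma rk1_apply {F V : Type*} [Field F] [AddCommGroup V] [Module F V]
    (f : V →ₗ[F] V →ₗ[F] F) (v u : V) : rk1 f v u = f v u • v := rfl

/-- For a nondegenerate symplectic space `(V,f)` over a field of
characteristic ≠ 2, the span of the rank-one maps `u ↦ f(v,u)•v` is exactly the finitary
symplectic Lie algebra: every finitary linear `t : V → V` (kernel of finite codimension)
with `f(t v, w) = −f(v, t w)` for all `v, w` is a finite linear combination of rank-one
maps, and conversely every such combination is finitary and symplectic. -/
theorem stmt8 {F V : Type*} [Field F] [AddCommGroup V] [Module F V]
    (h2 : (2 : F) ≠ 0)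
    (f : V →ₗ[F] V →ₗ[F] F) (halt : ∀ v : V, f v v = 0)
    (hnd : ∀ v : V, (∀ w : V, f v w = 0) → v = 0) :
    (∀ t : Module.End F V, FiniteDimensional F (V ⧸ LinearMap.ker t) →
      (∀ v w : V, f (t v) w = - f v (t w)) →
      t ∈ Submodule.span F (Set.range (rk1 f))) ∧
    (∀ t ∈ Submodule.span F (Set.range (rk1 f)),
      FiniteDimensional F (V ⧸ LinearMap.ker t) ∧
      ∀ v w : V, f (t v) w = - f v (t w)) := by
  -- skew-symmetry of f
  have hskew : ∀ u v : V, f u v = - f v u := by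
    intro u v
    have h := halt (u + v)
    simp only [map_add, LinearMap.add_apply, halt] at h
    linear_combination h
  -- relation between the two finitariness notions
  have hfd1 : ∀ t : Module.End F V, FiniteDimensional F (V ⧸ LinearMap.ker t) →
      FiniteDimensional F (LinearMap.range t) := by
    intro t ht
    exact LinearEquiv.finiteDimensional t.quotKerEquivRange
  have hfd2 : ∀ t : Module.End F V, FiniteDimensional F (LinearMap.range t) →
      FiniteDimensional F (V ⧸ LinearMap.ker t) := by
    intro t ht
    exact LinearEquiv.finiteDimensional t.quotKerEquivRange.symm
  constructor
  · -- hard direction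
    intro t hq hsym
    haveI hW : FiniteDimensional F (LinearMap.range t) := hfd1 t hq
    set n := Module.finrank F (LinearMap.range t) with hn
    let b : Module.Basis (Fin n) F (LinearMap.range t) := Module.finBasis F (LinearMap.range t)
    set e : Fin n → V := fun i => (b i : V) with he
    set φ : Fin n → (V →ₗ[F] F) := fun i => (b.coord i).comp t.rangeRestrict with hφ
    have hexp : ∀ u : V, t u = ∑ i, φ i u • e i := by
      intro u
      have h1 := b.sum_repr (t.rangeRestrict u)
      have : t u = ((t.rangeRestrict u : LinearMap.range t) : V) := rfl
      rw [this, ← h1]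
      simp [φ, e, Module.Basis.coord_apply]
      rw [this]
      conv_lhs => rw [← h1]
      simp only [Submodule.coe_sum, Submodule.coe_smul]
    have hrel : ∀ u w : V, ∑ i, φ i u * f (e i) w = ∑ i, φ i w * f (e i) u := by
      intro u w
      have h1 : f (t u) w = ∑ i, φ i u * f (e i) w := by
        rw [hexp u]
        simp [smul_eq_mul]
      have h2 : f u (t w) = ∑ i, φ i w * f u (e i) := by
        rw [hexp w]
        simp [smul_eq_mul]
      rw [← h1, hsym u w, h2, ← Finset.sum_neg_distrib]
      exact Finset.sum_congr rfl fun i _ => by rw [hskew (e i) u]; ring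
    -- linear independence of the functionals f (e i)
    have hkerf : LinearMap.ker f = ⊥ := by
      rw [LinearMap.ker_eq_bot']
      intro v hv
      exact hnd v fun w => by rw [hv]; rfl
    have hind : LinearIndependent F (fun i => f (e i)) := by
      have h1 : LinearIndependent F e :=
        b.linearIndependent.map' (LinearMap.range t).subtype (Submodule.ker_subtype _)
      exact h1.map' f hkerf
    -- each φ j is in the span of the f (e i)
    have hmem : ∀ j, φ j ∈ Submodule.span F (Set.range fun i => f (e i)) := by
      intro j
      apply mem_span_of_iInf_ker_le_ker
      intro u hu
      simp only [Submodule.mem_iInf, LinearMap.mem_ker] at hu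
      have h0 : ∑ i, φ i u • f (e i) = 0 := by
        ext w
        simp only [LinearMap.sum_apply, LinearMap.smul_apply, smul_eq_mul, LinearMap.zero_apply]
        rw [hrel u w]
        simp [hu]
      exact LinearMap.mem_ker.mpr (Fintype.linearIndependent_iff.mp hind _ h0 j)
    choose c hc using fun j => (Submodule.mem_span_range_iff_exists_fun F).mp (hmem j)
    -- hc j : ∑ i, c j i • f (e i) = φ j
    have hφc : ∀ j u, φ j u = ∑ i, c j i * f (e i) u := by
      intro j u
      rw [← hc j]
      simp
    -- symmetry of c
    have hcsym : ∀ i j, c i j = c j i := by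
      have key : ∀ u, ∑ j, (∑ i, (c j i - c i j) * f (e i) u) • f (e j) = 0 := by
        intro u
        ext w
        simp only [LinearMap.sum_apply, LinearMap.smul_apply, smul_eq_mul, LinearMap.zero_apply]
        have h := hrel u w
        simp only [hφc] at h
        simp only [Finset.sum_mul, sub_mul, Finset.sum_sub_distrib]
        rw [sub_eq_zero]
        calc ∑ j, ∑ i, c j i * f (e i) u * f (e j) w = ∑ i, φ i u * f (e i) w := by
              apply Finset.sum_congr rfl
              intro j _
              rw [hφc j u, Finset.sum_mul]
          _ = ∑ i, φ i w * f (e i) u := hrel u w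
          _ = ∑ i, ∑ j, c i j * f (e j) w * f (e i) u := by
              apply Finset.sum_congr rfl
              intro i _
              rw [hφc i w, Finset.sum_mul]
          _ = ∑ j, ∑ i, c i j * f (e i) u * f (e j) w := by
              rw [Finset.sum_comm]
              exact Finset.sum_congr rfl fun i _ => Finset.sum_congr rfl fun j _ => by ring
      have step1 : ∀ u j, ∑ i, (c j i - c i j) * f (e i) u = 0 := by
        intro u j
        exact Fintype.linearIndependent_iff.mp hind _ (key u) j
      intro i j
      have h0 : ∑ i', (c j i' - c i' j) • f (e i') = 0 := by
        ext u
        simp only [LinearMap.sum_apply, LinearMap.smul_apply, smul_eq_mul, LinearMap.zero_apply]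
        exact step1 u j
      have := Fintype.linearIndependent_iff.mp hind _ h0 i
      linear_combination -this
    -- write t as a combination of rank-one maps
    have htEq : t = (2⁻¹ : F) • ∑ j, ∑ i, c j i •
        (rk1 f (e i + e j) - rk1 f (e i) - rk1 f (e j)) := by
      ext u
      have hpol : ∀ i j, (rk1 f (e i + e j) - rk1 f (e i) - rk1 f (e j)) u
          = f (e i) u • e j + f (e j) u • e i := by
        intro i j
        simp only [LinearMap.sub_apply, rk1_apply, map_add, LinearMap.add_apply]
        module
      simp only [LinearMap.smul_apply, LinearMap.sum_apply]
      have hsum : ∑ j, ∑ i, c j i • ((rk1 f (e i + e j) - rk1 f (e i) - rk1 f (e j)) u)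
          = (2 : F) • t u := by
        have expand : ∀ j, ∑ i, c j i • ((rk1 f (e i + e j) - rk1 f (e i) - rk1 f (e j)) u)
            = (∑ i, (c j i * f (e i) u) • e j) + ∑ i, (c j i * f (e j) u) • e i := by
          intro j
          rw [← Finset.sum_add_distrib]
          apply Finset.sum_congr rfl
          intro i _
          rw [hpol i j, smul_add, smul_smul, smul_smul]
        calc ∑ j, ∑ i, c j i • ((rk1 f (e i + e j) - rk1 f (e i) - rk1 f (e j)) u)
            = ∑ j, ((∑ i, (c j i * f (e i) u) • e j) + ∑ i, (c j i * f (e j) u) • e i) :=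
              Finset.sum_congr rfl fun j _ => expand j
          _ = (∑ j, ∑ i, (c j i * f (e i) u) • e j) + ∑ j, ∑ i, (c j i * f (e j) u) • e i :=
              Finset.sum_add_distrib
          _ = t u + t u := by
              congr 1
              · rw [hexp u]
                apply Finset.sum_congr rfl
                intro j _
                rw [hφc j u, ← Finset.sum_smul]
              · rw [Finset.sum_comm, hexp u]
                apply Finset.sum_congr rfl
                intro i _
                rw [hφc i u, ← Finset.sum_smul]
                apply congrArg (· • e i)
                exact Finset.sum_congr rfl fun j _ => by rw [hcsym i j]
          _ = (2 : F) • t u := by rw [two_smul]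
      rw [hsum, smul_smul, inv_mul_cancel₀ h2, one_smul]
    rw [htEq]
    apply Submodule.smul_mem
    apply Submodule.sum_mem
    intro j _
    apply Submodule.sum_mem
    intro i _
    apply Submodule.smul_mem
    have hm : ∀ v : V, rk1 f v ∈ Submodule.span F (Set.range (rk1 f)) :=
      fun v => Submodule.subset_span ⟨v, rfl⟩
    exact Submodule.sub_mem _ (Submodule.sub_mem _ (hm _) (hm _)) (hm _)
  · -- easy direction
    intro t ht
    have main : FiniteDimensional F (LinearMap.range t) ∧
        ∀ v w : V, f (t v) w = - f v (t w) := by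
      induction ht using Submodule.span_induction with
      | mem x hx =>
        obtain ⟨v, rfl⟩ := hx
        constructor
        · have hle : LinearMap.range (rk1 f v) ≤ F ∙ v := by
            rintro x ⟨u, rfl⟩
            exact Submodule.smul_mem _ _ (Submodule.mem_span_singleton_self v)
          exact Submodule.finiteDimensional_of_le hle
        · intro u w
          simp only [rk1_apply, map_smul, LinearMap.smul_apply, smul_eq_mul]
          rw [hskew u v]
          ring
      | zero =>
        refine ⟨?_, by simp⟩
        rw [LinearMap.range_zero]
        infer_instance
      | add x y hx hy ihx ihy =>
        obtain ⟨hx1, hx2⟩ := ihx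
        obtain ⟨hy1, hy2⟩ := ihy
        constructor
        · haveI := hx1; haveI := hy1
          have hle : LinearMap.range (x + y) ≤ LinearMap.range x ⊔ LinearMap.range y := by
            rintro z ⟨u, rfl⟩
            exact Submodule.mem_sup.mpr ⟨x u, ⟨u, rfl⟩, y u, ⟨u, rfl⟩, rfl⟩
          exact Submodule.finiteDimensional_of_le hle
        · intro v w
          simp only [LinearMap.add_apply, map_add, LinearMap.add_apply, hx2 v w, hy2 v w]
          ring
      | smul a x hx ihx =>
        obtain ⟨hx1, hx2⟩ := ihx
        constructor
        · haveI := hx1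
          have hle : LinearMap.range (a • x) ≤ LinearMap.range x := by
            rintro z ⟨u, rfl⟩
            exact ⟨a • u, by simp⟩
          exact Submodule.finiteDimensional_of_le hle
        · intro v w
          simp only [LinearMap.smul_apply, map_smul, LinearMap.smul_apply, smul_eq_mul, hx2 v w]
          ring
    exact ⟨hfd2 t main.1, main.2⟩
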